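/- Let a > 0 and b > 0 with a/b irrational. Then the equation g(x) + g(x + a) + g(x + b) = 0 (for all x ∈ ℝ) admits no continuous periodic solution g ≠ 0; that is, every continuous g : ℝ → ℝ satisfying the equation for all x and admitting a period T > 0 is identically zero. -/

import Mathlib

open Real Complex MeasureTheory AddCircle

private lemma stmt18_root_int {θ : ℝ} (hre : Real.cos θ = -(1/2))
    (him : Real.sin θ = Real.sqrt 3 / 2 ∨ Real.sin θ = -(Real.sqrt 3 / 2)) :
    ∃ k : ℤ, θ = 2*π/3 + k*(2*π) ∨ θ = -(2*π/3) + k*(2*π) := by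
  have hcos : Real.cos (2*π/3) = -(1/2) := by
    rw [show (2*π/3 : ℝ) = π - π/3 by ring, Real.cos_pi_sub, Real.cos_pi_div_three]
  have hsin : Real.sin (2*π/3) = Real.sqrt 3 / 2 := by
    rw [show (2*π/3 : ℝ) = π - π/3 by ring, Real.sin_pi_sub, Real.sin_pi_div_three]
  rcases him with him | him
  · have hz : Complex.exp (θ * Complex.I) = Complex.exp ((2*π/3 : ℝ) * Complex.I) := by
      apply Complex.ext
      · rw [Complex.exp_ofReal_mul_I_re, Complex.exp_ofReal_mul_I_re, hre, hcos]
      · rw [Complex.exp_ofReal_mul_I_im, Complex.exp_ofReal_mul_I_im, him, hsin]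
    rw [Complex.exp_eq_exp_iff_exists_int] at hz
    obtain ⟨k, hk⟩ := hz
    refine ⟨k, Or.inl ?_⟩
    have := congrArg Complex.im hk
    simpa using this
  · have hz : Complex.exp (θ * Complex.I) = Complex.exp ((-(2*π/3) : ℝ) * Complex.I) := by
      apply Complex.ext
      · rw [Complex.exp_ofReal_mul_I_re, Complex.exp_ofReal_mul_I_re, hre, Real.cos_neg, hcos]
      · rw [Complex.exp_ofReal_mul_I_im, Complex.exp_ofReal_mul_I_im, him, Real.sin_neg, hsin]
    rw [Complex.exp_eq_exp_iff_exists_int] at hz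
    obtain ⟨k, hk⟩ := hz
    refine ⟨k, Or.inr ?_⟩
    have := congrArg Complex.im hk
    simpa using this

private lemma stmt18_key {T a b : ℝ} (hT : 0 < T) (hb : 0 < b) (hirr : Irrational (a / b))
    (n : ℤ) (hn : n ≠ 0)
    (h : 1 + Complex.exp ((2*π*(n*a/T) : ℝ) * Complex.I)
        + Complex.exp ((2*π*(n*b/T) : ℝ) * Complex.I) = 0) : False := by
  set θ : ℝ := 2*π*(n*a/T) with hθ
  set φ : ℝ := 2*π*(n*b/T) with hφ
  have hre := congrArg Complex.re h
  have him := congrArg Complex.im h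
  simp only [Complex.add_re, Complex.add_im, Complex.one_re, Complex.one_im,
    Complex.exp_ofReal_mul_I_re, Complex.exp_ofReal_mul_I_im, Complex.zero_re,
    Complex.zero_im] at hre him
  have h1 : Real.sin φ ^ 2 + Real.cos φ ^ 2 = 1 := Real.sin_sq_add_cos_sq φ
  have hcosφ : Real.cos φ = -1 - Real.cos θ := by linarith
  have hsinφ : Real.sin φ = -Real.sin θ := by linarith
  have h2 : Real.sin θ ^ 2 + Real.cos θ ^ 2 = 1 := Real.sin_sq_add_cos_sq θ
  rw [hcosφ, hsinφ] at h1
  have hcosθ : Real.cos θ = -(1/2) := by nlinarith [h1, h2]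
  have hcosφ' : Real.cos φ = -(1/2) := by rw [hcosφ, hcosθ]; ring
  have hsθ : Real.sin θ ^ 2 = (Real.sqrt 3 / 2) ^ 2 := by
    rw [div_pow, Real.sq_sqrt (by norm_num : (3:ℝ) ≥ 0)]; nlinarith
  have himθ : Real.sin θ = Real.sqrt 3 / 2 ∨ Real.sin θ = -(Real.sqrt 3 / 2) :=
    sq_eq_sq_iff_eq_or_eq_neg.mp hsθ |>.imp id (by intro h'; linarith)
  have himφ : Real.sin φ = Real.sqrt 3 / 2 ∨ Real.sin φ = -(Real.sqrt 3 / 2) := by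
    rcases himθ with h' | h'
    · right; rw [hsinφ, h']
    · left; rw [hsinφ, h']; ring
  obtain ⟨k, hk⟩ := stmt18_root_int hcosθ himθ
  obtain ⟨l, hl⟩ := stmt18_root_int hcosφ' himφ
  have h2π : (2*π : ℝ) ≠ 0 := by positivity
  have hka : ∃ p : ℤ, ((n:ℝ)*a/T) * 3 = p := by
    rcases hk with hk | hk
    · refine ⟨3*k+1, ?_⟩
      have h' : 2*π*((n:ℝ)*a/T) = 2*π*((k:ℝ)+1/3) := by rw [← hθ, hk]; ring
      have := mul_left_cancel₀ h2π h'
      push_cast; linarith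
    · refine ⟨3*k-1, ?_⟩
      have h' : 2*π*((n:ℝ)*a/T) = 2*π*((k:ℝ)-1/3) := by rw [← hθ, hk]; ring
      have := mul_left_cancel₀ h2π h'
      push_cast; linarith
  have hkb : ∃ q : ℤ, ((n:ℝ)*b/T) * 3 = q := by
    rcases hl with hl | hl
    · refine ⟨3*l+1, ?_⟩
      have h' : 2*π*((n:ℝ)*b/T) = 2*π*((l:ℝ)+1/3) := by rw [← hφ, hl]; ring
      have := mul_left_cancel₀ h2π h'
      push_cast; linarith
    · refine ⟨3*l-1, ?_⟩
      have h' : 2*π*((n:ℝ)*b/T) = 2*π*((l:ℝ)-1/3) := by rw [← hφ, hl]; ring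
      have := mul_left_cancel₀ h2π h'
      push_cast; linarith
  obtain ⟨p, hp⟩ := hka
  obtain ⟨q, hq⟩ := hkb
  have hTne : T ≠ 0 := ne_of_gt hT
  have hnne : (n:ℝ) ≠ 0 := Int.cast_ne_zero.mpr hn
  have hqne : (q:ℝ) ≠ 0 := by
    rw [← hq]
    have : (n:ℝ)*b/T ≠ 0 := div_ne_zero (mul_ne_zero hnne (ne_of_gt hb)) hTne
    simpa using this
  have hab : a / b = (p : ℝ) / q := by
    rw [div_eq_div_iff (ne_of_gt hb) hqne, ← hp, ← hq]
    field_simp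
  exact hirr ⟨(p : ℚ)/(q : ℚ), by push_cast; rw [hab]⟩

private lemma stmt18_fourier_hom {T : ℝ} (m : ℤ) (x y : AddCircle T) :
    fourier m (x + y) = fourier m x * fourier m y := by
  simp_rw [fourier_apply, smul_add, AddCircle.toCircle_add, Circle.coe_mul]

private lemma stmt18_integrable {T : ℝ} [hT : Fact (0 < T)] {F : AddCircle T → ℂ}
    (hF : Continuous F) : Integrable F (@haarAddCircle T hT) :=
  hF.integrable_of_hasCompactSupport
    (IsCompact.of_isClosed_subset isCompact_univ (isClosed_tsupport F) (Set.subset_univ _))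

private lemma stmt18_coeff_translate {T : ℝ} [hT : Fact (0 < T)] (F : AddCircle T → ℂ)
    (c : AddCircle T) (n : ℤ) :
    fourierCoeff (fun x => F (x + c)) n = fourier n c * fourierCoeff F n := by
  have h1 : (fourier n c : ℂ) * fourier (-n) c = 1 := by
    rw [← fourier_add]; simp
  have key : ∀ x : AddCircle T,
      fourier (-n) x • F (x + c) = fourier n c * ((fun y => fourier (-n) y • F y) (x + c)) := by
    intro x
    simp only [smul_eq_mul, stmt18_fourier_hom]
    linear_combination (-(fourier (-n) x * F (x + c))) * h1
  calc fourierCoeff (fun x => F (x + c)) n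
      = ∫ x : AddCircle T, fourier n c * ((fun y => fourier (-n) y • F y) (x + c))
          ∂haarAddCircle := by
        rw [fourierCoeff]; exact integral_congr_ae (Filter.Eventually.of_forall key)
    _ = fourier n c * ∫ x : AddCircle T, (fun y => fourier (-n) y • F y) (x + c)
          ∂haarAddCircle := integral_const_mul _ _
    _ = fourier n c * ∫ y : AddCircle T, fourier (-n) y • F y ∂haarAddCircle := by
        exact integral_add_right_eq_self (μ := haarAddCircle)
          (fun y => fourier (-n) y • F y) c ▸ rfl
    _ = fourier n c * fourierCoeff F n := rfl

private lemma stmt18_coeff_add {T : ℝ} [hT : Fact (0 < T)] {F G : AddCircle T → ℂ}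
    (hF : Continuous F) (hG : Continuous G) (n : ℤ) :
    fourierCoeff (fun x => F x + G x) n = fourierCoeff F n + fourierCoeff G n := by
  unfold fourierCoeff
  simp_rw [smul_add]
  exact integral_add (stmt18_integrable ((map_continuous (fourier (-n))).smul hF))
    (stmt18_integrable ((map_continuous (fourier (-n))).smul hG))

/-- if `a, b > 0` and `a / b` is irrational, the equation
`g x + g (x + a) + g (x + b) = 0` has no nonzero continuous periodic solution. -/
theorem stmt_18 (a b : ℝ) (ha : 0 < a) (hb : 0 < b) (hirr : Irrational (a / b))
    (g : ℝ → ℝ) (hg : Continuous g) (hper : ∃ T > (0 : ℝ), ∀ x : ℝ, g (x + T) = g x)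
    (heq : ∀ x : ℝ, g x + g (x + a) + g (x + b) = 0) :
    g = 0 := by
  obtain ⟨T, hT0, hperT⟩ := hper
  haveI : Fact (0 < T) := ⟨hT0⟩
  have hper' : Function.Periodic (fun x : ℝ => (g x : ℂ)) T := fun x => by
    simp [hperT x]
  set F : AddCircle T → ℂ := hper'.lift with hFdef
  have hFc : Continuous F := (Complex.continuous_ofReal.comp hg).quotient_liftOn' _
  have hFcoe : ∀ x : ℝ, F ↑x = (g x : ℂ) := fun x => hper'.lift_coe x
  have hFa : Continuous fun x : AddCircle T => F (x + (a : AddCircle T)) :=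
    hFc.comp (continuous_add_right _)
  have hFb : Continuous fun x : AddCircle T => F (x + (b : AddCircle T)) :=
    hFc.comp (continuous_add_right _)
  have heqF : ∀ x : AddCircle T, F x + F (x + (a : ℝ)) + F (x + (b : ℝ)) = 0 := by
    intro x
    induction x using QuotientAddGroup.induction_on with
    | H y =>
      have e1 : ((y : AddCircle T) + (a : ℝ)) = ((y + a : ℝ) : AddCircle T) := by
        norm_cast
      have e2 : ((y : AddCircle T) + (b : ℝ)) = ((y + b : ℝ) : AddCircle T) := by
        norm_cast
      rw [e1, e2, hFcoe, hFcoe, hFcoe]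
      exact_mod_cast congrArg (fun t : ℝ => (t : ℂ)) (heq y)
  have hcoeff : ∀ n : ℤ, fourierCoeff F n = 0 := by
    intro n
    have hzero : fourierCoeff
        (fun x : AddCircle T => F x + (F (x + (a : ℝ)) + F (x + (b : ℝ)))) n = 0 := by
      have he : (fun x : AddCircle T => F x + (F (x + (a : ℝ)) + F (x + (b : ℝ))))
          = fun _ => (0 : ℂ) := funext fun x => by rw [← add_assoc]; exact heqF x
      rw [he]
      unfold fourierCoeff
      simp
    rw [stmt18_coeff_add (G := fun x : AddCircle T => F (x + (a : ℝ)) + F (x + (b : ℝ))) hFc (hFa.add hFb) n, stmt18_coeff_add hFa hFb n,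
      stmt18_coeff_translate F _ n, stmt18_coeff_translate F _ n] at hzero
    have hfactor : (1 + fourier n ((a : ℝ) : AddCircle T)
        + fourier n ((b : ℝ) : AddCircle T)) * fourierCoeff F n = 0 := by
      linear_combination hzero
    rcases mul_eq_zero.mp hfactor with hf | hf
    · exfalso
      rcases eq_or_ne n 0 with rfl | hn
      · simp [fourier_zero] at hf
        norm_num at hf
      · apply stmt18_key hT0 hb hirr n hn
        have ea : Complex.exp ((2*π*((n:ℝ)*a/T) : ℝ) * Complex.I)
            = fourier n ((a : ℝ) : AddCircle T) := by
          rw [fourier_coe_apply]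
          congr 1
          push_cast
          ring
        have eb : Complex.exp ((2*π*((n:ℝ)*b/T) : ℝ) * Complex.I)
            = fourier n ((b : ℝ) : AddCircle T) := by
          rw [fourier_coe_apply]
          congr 1
          push_cast
          ring
        rw [ea, eb]
        exact hf
    · exact hf
  -- conclude F = 0 via uniform convergence of the (zero) Fourier series
  set Fc : C(AddCircle T, ℂ) := ⟨F, hFc⟩ with hFcdef
  have hcoeff' : fourierCoeff (Fc : AddCircle T → ℂ) = 0 := funext fun n => hcoeff n
  have hsum : HasSum (fun i : ℤ => fourierCoeff (Fc : AddCircle T → ℂ) i • fourier i) Fc :=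
    hasSum_fourier_series_of_summable (by rw [hcoeff']; exact summable_zero)
  have hsum0 : HasSum (fun i : ℤ => fourierCoeff (Fc : AddCircle T → ℂ) i • fourier i)
      (0 : C(AddCircle T, ℂ)) := by
    have : (fun i : ℤ => fourierCoeff (Fc : AddCircle T → ℂ) i • fourier i)
        = fun _ => (0 : C(AddCircle T, ℂ)) := by
      funext i
      rw [hcoeff']
      simp
    rw [this]
    exact hasSum_zero
  have hF0 : Fc = 0 := hsum.unique hsum0
  funext x
  have : F ((x : ℝ) : AddCircle T) = 0 := by
    have := congrArg (fun f : C(AddCircle T, ℂ) => f ((x : ℝ) : AddCircle T)) hF0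
    simpa [hFcdef] using this
  rw [hFcoe] at this
  exact_mod_cast this
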